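/- Consider the two-parameter Poisson-Dirichlet urn scheme on the finite space {1,...,r} (r ≥ 2) with uniform base measure ν(l) = 1/r, parameters 0 ≤ α < 1 and θ > -α, where P{X_1 = l} = 1/r and the conditional law of X_{i+1} given X_1,...,X_i puts mass (θ + α·n(p_i))/(θ+i) on fresh draws from ν and mass (e_{j,i} - α)/(θ+i) on each previously seen distinct value X_j*. Then P{X_1=1, X_2=2, X_3=1} = (θ+α)((θ+2α)/r + 1-α)/(r²(θ+1)(θ+2)) and P{X_1=1, X_2=1, X_3=2} = ((θ+α)/r + 1-α)(θ+α)/(r²(θ+1)(θ+2)); consequently these two probabilities are equal if and only if α = 0, so the sequence fails to be exchangeable whenever α ≠ 0. -/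

import Mathlib

/-- Conditional law of the next draw for the two-parameter Poisson–Dirichlet urn over the
finite space `{1,…,r}` with uniform (atomic) base measure `ν(l) = 1/r`: given the history
`hist`, the next value is `x` with probability
`((θ + α·n)·(1/r) + (count of x in hist − α)·1{x ∈ hist}) / (θ + |hist|)`,
where `n` is the number of distinct values in the history. -/
noncomputable def pdCond (α θ : ℝ) (r : ℕ) (hist : List ℕ) (x : ℕ) : ℝ :=
  ((θ + α * hist.dedup.length) * (1 / r) +
      (if x ∈ hist then ((hist.count x : ℝ) - α) else 0)) / (θ + hist.length)

/-- Joint probability of the first three draws. -/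
noncomputable def pdJoint3 (α θ : ℝ) (r : ℕ) (x1 x2 x3 : ℕ) : ℝ :=
  (1 / r) * pdCond α θ r [x1] x2 * pdCond α θ r [x1, x2] x3

/-- For the two-parameter Poisson–Dirichlet urn over `{1,…,r}` (`r ≥ 2`) with uniform
atomic base measure, `P{X₁=1, X₂=2, X₃=1} = (θ+α)((θ+2α)/r + 1−α)/(r²(θ+1)(θ+2))` and
`P{X₁=1, X₂=1, X₃=2} = ((θ+α)/r + 1−α)(θ+α)/(r²(θ+1)(θ+2))`; these are equal iff `α = 0`,
so the sequence fails to be exchangeable whenever `α ≠ 0`. -/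
theorem pd_urn_not_exchangeable_atomic (α θ : ℝ) (r : ℕ)
    (hα0 : 0 ≤ α) (hα1 : α < 1) (hθ : -α < θ) (hr : 2 ≤ r) :
    pdJoint3 α θ r 1 2 1 =
      (θ + α) * ((θ + 2*α)/r + 1 - α) / (r^2 * (θ + 1) * (θ + 2)) ∧
    pdJoint3 α θ r 1 1 2 =
      ((θ + α)/r + 1 - α) * (θ + α) / (r^2 * (θ + 1) * (θ + 2)) ∧
    (pdJoint3 α θ r 1 2 1 = pdJoint3 α θ r 1 1 2 ↔ α = 0) := by
  have hr0 : (r : ℝ) ≠ 0 := by positivity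
  have hθα : 0 < θ + α := by linarith
  have h1 : (0:ℝ) < θ + 1 := by linarith
  have h2 : (0:ℝ) < θ + 2 := by linarith
  have e1 : pdJoint3 α θ r 1 2 1 =
      (θ + α) * ((θ + 2*α)/r + 1 - α) / (r^2 * (θ + 1) * (θ + 2)) := by
    have d1 : ([1] : List ℕ).dedup = [1] := by decide
    have d2 : ([1, 2] : List ℕ).dedup = [1, 2] := by decide
    simp only [pdJoint3, pdCond, d1, d2, List.count, List.length, List.mem_cons,
      List.not_mem_nil]
    norm_num
    field_simp
    ring
  have e2 : pdJoint3 α θ r 1 1 2 =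
      ((θ + α)/r + 1 - α) * (θ + α) / (r^2 * (θ + 1) * (θ + 2)) := by
    have d1 : ([1] : List ℕ).dedup = [1] := by decide
    have d2 : ([1, 1] : List ℕ).dedup = [1] := by decide
    simp only [pdJoint3, pdCond, d1, d2, List.count, List.length, List.mem_cons,
      List.not_mem_nil]
    norm_num
    field_simp
    ring
  refine ⟨e1, e2, ?_⟩
  rw [e1, e2]
  rw [div_eq_div_iff (by positivity) (by positivity)]
  constructor
  · intro h
    have : α * (θ + α) = 0 := by
      have hr2 : (r:ℝ)^2 ≠ 0 := by positivity
      have := mul_right_cancel₀ (by positivity : ((r:ℝ)^2 * (θ+1) * (θ+2)) ≠ 0) h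
      have h' : (θ + α) * (α / r) = 0 := by field_simp at this ⊢; have hα : α = 0 := (by linarith [this]); subst hα; ring
      have := mul_eq_zero.mp h'
      rcases this with h | h
      · rw [h]; ring
      · have : α = 0 := by field_simp at h; simpa using h
        rw [this]; ring
    rcases mul_eq_zero.mp this with h | h
    · exact h
    · linarith
  · intro h; rw [h]; ring
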